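/- arXiv:2008.08822 — 7 statements merged into one kernel-verified Lean document; each statement's English description precedes it below -/
import Mathlib

section
/- Let P, Q ∈ R[x] with Q(0) invertible, and write P(x)Q(-x) = U_e(x²) + x·U_o(x²) for its even and odd parts, and Q(x)Q(-x) = V(x²). Then for every N ≥ 0, the coefficient of x^N in the power series P(x)/Q(x) equals the coefficient of x^{N/2} in U_e(x)/V(x) if N is even, and the coefficient of x^{(N-1)/2} in U_o(x)/V(x) if N is odd. -/
open Polynomial PowerSeries

/-- Substitution of `X^2` into a power series, as a ring hom. -/
noncomputable def sq2 {R : Type*} [CommRing R] : PowerSeries R →+* PowerSeries R where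
  toFun f := PowerSeries.mk fun n => if 2 ∣ n then PowerSeries.coeff (n / 2) f else 0
  map_one' := by
    ext n
    simp only [PowerSeries.coeff_mk, PowerSeries.coeff_one]
    by_cases hn : 2 ∣ n
    · rw [if_pos hn]
      by_cases h0 : n = 0
      · subst h0; norm_num
      · have : n / 2 ≠ 0 := by omega
        simp [this, h0]
    · have h0 : n ≠ 0 := by rintro rfl; exact hn ⟨0, rfl⟩
      simp [hn, h0]
  map_mul' f g := by
    ext n
    simp only [PowerSeries.coeff_mk, PowerSeries.coeff_mul]
    by_cases hn : 2 ∣ n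
    · obtain ⟨m, rfl⟩ := hn
      rw [if_pos (dvd_mul_right 2 m)]
      symm
      have hsub : (Finset.HasAntidiagonal.antidiagonal m).map
          ⟨fun p => (2 * p.1, 2 * p.2), by intro p q h; simp only [Prod.mk.injEq] at h
                                           ext <;> omega⟩
          ⊆ Finset.HasAntidiagonal.antidiagonal (2 * m) := by
        intro p hp
        simp only [Finset.mem_map, Finset.HasAntidiagonal.mem_antidiagonal, Function.Embedding.coeFn_mk] at hp ⊢
        obtain ⟨q, hq, rfl⟩ := hp
        show 2 * q.1 + 2 * q.2 = 2 * m
        omega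
      rw [← Finset.sum_subset hsub, Finset.sum_map]
      · apply Finset.sum_congr
        · congr 1; omega
        · intro p hp
          show ((if 2 ∣ 2 * p.1 then PowerSeries.coeff (2 * p.1 / 2) f else 0) * if 2 ∣ 2 * p.2 then PowerSeries.coeff (2 * p.2 / 2) g else 0) = _
          simp [Nat.mul_div_cancel_left _ (by norm_num : 0 < 2)]
      · intro p hp hnot
        simp only [Finset.HasAntidiagonal.mem_antidiagonal] at hp
        simp only [Finset.mem_map, Finset.HasAntidiagonal.mem_antidiagonal, Function.Embedding.coeFn_mk,
          Prod.mk.injEq, not_exists, Prod.exists] at hnot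
        by_cases h1 : 2 ∣ p.1
        · by_cases h2 : 2 ∣ p.2
          · exfalso
            obtain ⟨a, ha⟩ := h1; obtain ⟨b, hb⟩ := h2
            exact (hnot a b ⟨by omega, by ext <;> show 2 * _ = _ <;> simp <;> omega⟩)
          · simp [h2]
        · simp [h1]
    · rw [if_neg hn]
      symm
      apply Finset.sum_eq_zero
      intro p hp
      simp only [Finset.HasAntidiagonal.mem_antidiagonal] at hp
      by_cases h1 : 2 ∣ p.1
      · have h2 : ¬ 2 ∣ p.2 := by omega
        simp [h2]
      · simp [h1]
  map_zero' := by ext n; simp [PowerSeries.coeff_mk]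
  map_add' f g := by
    ext n
    simp only [PowerSeries.coeff_mk, map_add]
    split_ifs <;> simp

theorem coeff_sq2 {R : Type*} [CommRing R] (f : PowerSeries R) (n : ℕ) :
    PowerSeries.coeff n (sq2 f) =
      if 2 ∣ n then PowerSeries.coeff (n / 2) f else 0 := by
  change PowerSeries.coeff n (PowerSeries.mk fun k =>
    if 2 ∣ k then PowerSeries.coeff (k / 2) f else 0) = _
  rw [PowerSeries.coeff_mk]

theorem sq2_coe {R : Type*} [CommRing R] (W : Polynomial R) :
    sq2 (W : PowerSeries R) = ((W.comp (Polynomial.X ^ 2) : Polynomial R) : PowerSeries R) := by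
  have key : sq2.comp (Polynomial.coeToPowerSeries.ringHom (R := R))
      = (Polynomial.coeToPowerSeries.ringHom (R := R)).comp
          (Polynomial.eval₂RingHom Polynomial.C (Polynomial.X ^ 2)) := by
    apply Polynomial.ringHom_ext
    · intro r
      ext n
      simp only [RingHom.comp_apply, Polynomial.coeToPowerSeries.ringHom_apply,
        coe_eval₂RingHom, Polynomial.eval₂_C, Polynomial.coe_C, coeff_sq2,
        PowerSeries.coeff_C]
      by_cases hn : 2 ∣ n
      · rw [if_pos hn]
        by_cases h0 : n = 0
        · subst h0; norm_num
        · have : n / 2 ≠ 0 := by omega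
          simp [this, h0]
      · have h0 : n ≠ 0 := by rintro rfl; exact hn ⟨0, rfl⟩
        simp [hn, h0]
    · ext n
      simp only [RingHom.comp_apply, Polynomial.coeToPowerSeries.ringHom_apply,
        Polynomial.coe_X, coe_eval₂RingHom, Polynomial.eval₂_X, coeff_sq2,
        Polynomial.coe_pow, PowerSeries.coeff_X_pow, PowerSeries.coeff_X]
      by_cases hn : 2 ∣ n
      · rw [if_pos hn]
        by_cases h2 : n = 2
        · subst h2; norm_num
        · have h1 : n / 2 ≠ 1 := by omega
          simp [h1, h2]
      · have h2 : n ≠ 2 := by rintro rfl; exact hn ⟨1, rfl⟩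
        simp [hn, h2]
  have := congrFun (congrArg (fun f => f.toFun) key) W
  simpa [Polynomial.comp, Polynomial.eval₂RingHom] using this

theorem stmt_2 {R : Type*} [CommRing R] (P Q Ue Uo V : Polynomial R)
    (hQ0 : IsUnit (Q.coeff 0))
    (hU : P * Q.comp (-Polynomial.X)
        = Ue.comp (Polynomial.X ^ 2) + Polynomial.X * Uo.comp (Polynomial.X ^ 2))
    (hV : Q * Q.comp (-Polynomial.X) = V.comp (Polynomial.X ^ 2))
    (F Ge Go : PowerSeries R)
    (hF : (Q : PowerSeries R) * F = (P : PowerSeries R))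
    (hGe : (V : PowerSeries R) * Ge = (Ue : PowerSeries R))
    (hGo : (V : PowerSeries R) * Go = (Uo : PowerSeries R)) :
    ∀ N : ℕ, PowerSeries.coeff N F =
      if Even N then PowerSeries.coeff (N / 2) Ge
      else PowerSeries.coeff (N / 2) Go := by
  set W : PowerSeries R := ((V.comp (Polynomial.X ^ 2) : Polynomial R) : PowerSeries R) with hW
  -- W has unit constant coefficient
  have hconst : PowerSeries.constantCoeff W = Q.coeff 0 * Q.coeff 0 := by
    have h0 : (V.comp (Polynomial.X ^ 2)).coeff 0 = Q.coeff 0 * Q.coeff 0 := by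
      rw [← hV]
      simp [Polynomial.coeff_zero_eq_eval_zero]
    simpa [hW, Polynomial.constantCoeff_coe] using h0
  have hunit : IsUnit W := by
    rw [PowerSeries.isUnit_iff_constantCoeff, hconst]
    exact hQ0.mul hQ0
  -- key equation
  have h1 : W * F = ((P * Q.comp (-Polynomial.X) : Polynomial R) : PowerSeries R) := by
    rw [hW, ← hV, Polynomial.coe_mul, Polynomial.coe_mul]
    calc (Q : PowerSeries R) * (Q.comp (-Polynomial.X) : Polynomial R) * F
        = ((Q.comp (-Polynomial.X) : Polynomial R) : PowerSeries R)
            * ((Q : PowerSeries R) * F) := by ring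
      _ = ((Q.comp (-Polynomial.X) : Polynomial R) : PowerSeries R) * (P : PowerSeries R) := by
            rw [hF]
      _ = (P : PowerSeries R) * ((Q.comp (-Polynomial.X) : Polynomial R) : PowerSeries R) := by
            ring
  have h2 : W * (sq2 Ge + PowerSeries.X * sq2 Go)
      = ((P * Q.comp (-Polynomial.X) : Polynomial R) : PowerSeries R) := by
    rw [hU, Polynomial.coe_add, Polynomial.coe_mul, Polynomial.coe_X,
      hW, ← sq2_coe, ← sq2_coe, ← sq2_coe, mul_add, ← map_mul, hGe]
    rw [show sq2 (V : PowerSeries R) * (PowerSeries.X * sq2 Go)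
        = PowerSeries.X * (sq2 (V : PowerSeries R) * sq2 Go) by ring, ← map_mul, hGo]
  have hFeq : F = sq2 Ge + PowerSeries.X * sq2 Go :=
    hunit.mul_left_cancel (by rw [h1, h2])
  intro N
  rw [hFeq, map_add, coeff_sq2]
  rcases Nat.even_or_odd N with hN | hN
  · rw [if_pos hN.two_dvd, if_pos hN]
    rcases N with _ | n
    · simp
    · rw [PowerSeries.coeff_succ_X_mul, coeff_sq2]
      have hodd : ¬ (2 ∣ n) := by
        have := hN.two_dvd; omega
      rw [if_neg hodd, add_zero]
  · obtain ⟨n, rfl⟩ := hN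
    have h2 : ¬ (2 ∣ 2 * n + 1) := by omega
    rw [if_neg h2, if_neg (Nat.not_even_iff_odd.mpr ⟨n, rfl⟩), zero_add,
      PowerSeries.coeff_succ_X_mul, coeff_sq2, if_pos (dvd_mul_right 2 n)]
    have hn : 2 * n / 2 = n := by omega
    have hn' : (2 * n + 1) / 2 = n := by omega
    rw [hn, hn']
end

section
/- Let Γ ∈ R[x] be monic of degree d with Γ(0) invertible, let Q(x) = x^d Γ(1/x) be its reversal, and let Σ a_i x^i be the power series 1/Q. For N ≥ d, write x^N = L(x)·Γ(x) + ρ(x) with deg ρ < d, ρ(x) = Σ r_i x^i. Then v(x) := (Σ_{i=0}^{d-1} a_{N-d+1+i} x^i) · Q(x) mod x^d satisfies v(x) = x^{d-1} ρ(1/x), i.e., v_i = r_{d-1-i} for 0 ≤ i ≤ d-1. -/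
open Polynomial PowerSeries

private lemma reflect_shift_aux {R : Type*} [CommRing R] (p : Polynomial R) {m n : ℕ}
    (hp : p.natDegree ≤ m) (hmn : m ≤ n) :
    p.reflect n = p.reflect m * Polynomial.X ^ (n - m) := by
  ext i
  rw [Polynomial.coeff_reflect, Polynomial.coeff_mul_X_pow']
  split_ifs with h
  · rw [Polynomial.coeff_reflect]
    by_cases hin : i ≤ n
    · rw [Polynomial.revAt_le hin, Polynomial.revAt_le (by omega)]
      congr 1; omega
    · rw [Polynomial.revAt_eq_self_of_lt (by omega), Polynomial.revAt_eq_self_of_lt (by omega)]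
      rw [Polynomial.coeff_eq_zero_of_natDegree_lt (by omega),
        Polynomial.coeff_eq_zero_of_natDegree_lt (by omega)]
  · rw [Polynomial.revAt_le (by omega), Polynomial.coeff_eq_zero_of_natDegree_lt (by omega)]

theorem stmt_9 {R : Type*} [CommRing R] (Γ : Polynomial R) (d N : ℕ)
    (hd : 1 ≤ d) (hmon : Γ.Monic) (hdeg : Γ.natDegree = d)
    (hunit : IsUnit (Γ.coeff 0)) (hN : d ≤ N)
    (A : PowerSeries R) (hA : (Γ.reverse : PowerSeries R) * A = 1) :
    ∀ i < d,
      ((∑ j ∈ Finset.range d,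
          Polynomial.C (PowerSeries.coeff (N + 1 - d + j) A) * Polynomial.X ^ j)
        * Γ.reverse).coeff i
      = (Polynomial.X ^ N %ₘ Γ).coeff (d - 1 - i) := by
  intro i hi
  nontriviality R
  set ρ : Polynomial R := Polynomial.X ^ N %ₘ Γ with hρdef
  set L : Polynomial R := Polynomial.X ^ N /ₘ Γ with hLdef
  have hΓ1 : Γ ≠ 1 := by
    intro h; rw [h, Polynomial.natDegree_one] at hdeg; omega
  have hρdeg : ρ.natDegree ≤ d - 1 := by
    have h := Polynomial.natDegree_modByMonic_lt (Polynomial.X ^ N) hmon hΓ1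
    rw [hdeg, ← hρdef] at h; omega
  have hLdeg : L.natDegree = N - d := by
    rw [hLdef, Polynomial.natDegree_divByMonic _ hmon, Polynomial.natDegree_X_pow, hdeg]
  -- key polynomial identity from reflecting x^N = Γ L + ρ
  have hkey : Γ.reverse * L.reflect (N - d)
      + ρ.reflect (d - 1) * Polynomial.X ^ (N + 1 - d) = 1 := by
    have h0 : ρ + Γ * L = Polynomial.X ^ N := Polynomial.modByMonic_add_div _ Γ
    have h1 := congrArg (Polynomial.reflect N) h0
    rw [Polynomial.reflect_add, Polynomial.reflect_monomial,
      Polynomial.revAt_le (le_refl N), Nat.sub_self, pow_zero] at h1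
    have h2 : Polynomial.reflect N (Γ * L) = Γ.reverse * L.reflect (N - d) := by
      have := Polynomial.reflect_mul Γ L (F := d) (G := N - d) (by omega) (by omega)
      rw [show d + (N - d) = N by omega] at this
      rw [this, Polynomial.reverse, hdeg]
    have h3 : Polynomial.reflect N ρ = ρ.reflect (d - 1) * Polynomial.X ^ (N + 1 - d) := by
      rw [reflect_shift_aux ρ hρdeg (by omega), show N - (d - 1) = N + 1 - d by omega]
    rw [h2, h3] at h1
    linear_combination h1
  -- power series consequence
  set B : PowerSeries R := (ρ.reflect (d - 1) : PowerSeries R) * A with hBdef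
  have hApow : A = (L.reflect (N - d) : PowerSeries R)
      + PowerSeries.X ^ (N + 1 - d) * B := by
    have := congrArg (fun p : Polynomial R => (p : PowerSeries R) * A) hkey
    simp only [Polynomial.coe_add, Polynomial.coe_mul, Polynomial.coe_pow,
      Polynomial.coe_X, Polynomial.coe_one, one_mul] at this
    calc A = ((Γ.reverse : PowerSeries R) * A) * ((L.reflect (N - d) : PowerSeries R))
          + PowerSeries.X ^ (N + 1 - d) * B := by
            rw [hBdef]; linear_combination -this
      _ = _ := by rw [hA, one_mul]
  have hcoeffA : ∀ j, PowerSeries.coeff (N + 1 - d + j) A = PowerSeries.coeff j B := by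
    intro j
    rw [congrArg (PowerSeries.coeff (N + 1 - d + j)) hApow, map_add,
      Polynomial.coeff_coe, Polynomial.coeff_reflect,
      Polynomial.revAt_eq_self_of_lt (by omega),
      Polynomial.coeff_eq_zero_of_natDegree_lt (by omega), zero_add,
      show N + 1 - d + j = j + (N + 1 - d) by omega, PowerSeries.coeff_X_pow_mul]
  -- B * Q = ρ.reflect (d-1)
  have hBQ : B * (Γ.reverse : PowerSeries R) = (ρ.reflect (d - 1) : PowerSeries R) := by
    rw [hBdef, mul_assoc, mul_comm A, hA, mul_one]
  -- now compute the coefficient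
  have hrhs : ρ.coeff (d - 1 - i) = PowerSeries.coeff i
      (B * (Γ.reverse : PowerSeries R)) := by
    rw [hBQ, Polynomial.coeff_coe, Polynomial.coeff_reflect, Polynomial.revAt_le (by omega)]
  rw [hrhs, Polynomial.coeff_mul, PowerSeries.coeff_mul]
  apply Finset.sum_congr rfl
  rintro ⟨p, q⟩ hpq
  rw [Finset.HasAntidiagonal.mem_antidiagonal] at hpq
  have hpd : p < d := by omega
  rw [Polynomial.coeff_coe]
  congr 1
  rw [Polynomial.finset_sum_coeff]
  simp only [Polynomial.coeff_C_mul, Polynomial.coeff_X_pow, mul_ite, mul_one, mul_zero]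
  rw [Finset.sum_ite_eq (Finset.range d) p (fun j => PowerSeries.coeff (N + 1 - d + j) A),
    if_pos (Finset.mem_range.mpr hpd), hcoeffA]
end

section
/- Let Γ ∈ R[x] be monic of degree d, Q(x) = x^d Γ(1/x), and 1/Q = Σ a_i x^i in R[[x]]. Then x^N mod Γ(x) = Σ_{i=0}^{d-1} r_i x^i where the row vector (r_0, ..., r_{d-1}) satisfies (a_N, ..., a_{N+d-1}) = (r_0, ..., r_{d-1}) · H, with H the d×d Hankel matrix H_{ij} = a_{i+j}. -/
open Polynomial PowerSeries Finset

theorem stmt_10 {R : Type*} [CommRing R] (Γ : Polynomial R) (d N : ℕ)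
    (hd : 1 ≤ d) (hmon : Γ.Monic) (hdeg : Γ.natDegree = d)
    (A : PowerSeries R) (hA : (Γ.reverse : PowerSeries R) * A = 1) :
    ∀ j : Fin d,
      PowerSeries.coeff (R := R) (N + j) A =
        ∑ i : Fin d, (Polynomial.X ^ N %ₘ Γ).coeff i * PowerSeries.coeff (R := R) (i + j) A := by
  intro j
  set a : ℕ → R := fun n => PowerSeries.coeff (R := R) n A with ha
  -- key step: the linear recurrence satisfied by the coefficients of A
  have hstep : ∀ m : ℕ, ∑ k ∈ range (d + 1), Γ.coeff k * a (k + m) = 0 := by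
    intro m
    have h0 : PowerSeries.coeff (R := R) (d + m) ((Γ.reverse : PowerSeries R) * A) = 0 := by
      rw [hA, PowerSeries.coeff_one]
      simp only [ite_eq_right_iff]
      intro h; omega
    rw [PowerSeries.coeff_mul, Finset.Nat.sum_antidiagonal_eq_sum_range_succ_mk] at h0
    have h1 : ∑ i ∈ range (d + 1),
        (PowerSeries.coeff (R := R) i (Γ.reverse : PowerSeries R)) * a (d + m - i) = 0 := by
      rw [← h0]
      apply Finset.sum_subset
      · apply Finset.range_subset_range.2; omega
      · intro x _ hx
        simp only [Finset.mem_range, not_lt] at hx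
        have : (Γ.reverse).coeff x = 0 := by
          rw [Polynomial.coeff_reverse, hdeg, revAt_eq_self_of_lt (by omega)]
          exact Polynomial.coeff_eq_zero_of_natDegree_lt (by omega)
        simp [Polynomial.coeff_coe, this]
    rw [← Finset.sum_range_reflect] at h1
    rw [← h1]
    apply Finset.sum_congr rfl
    intro k hk
    simp only [Finset.mem_range] at hk
    have hkd : k ≤ d := by omega
    have h2 : d + 1 - 1 - k = d - k := by omega
    rw [h2, Polynomial.coeff_coe, Polynomial.coeff_reverse, hdeg,
      revAt_le (by omega)]
    congr 2
    · omega
    · omega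
  -- the linear functional kills all multiples of Γ
  have hmul : ∀ (S : Polynomial R) (m : ℕ),
      ((Γ * S).sum fun k c => c * a (k + m)) = 0 := by
    intro S
    induction S using Polynomial.induction_on' with
    | add p q hp hq =>
      intro m
      rw [mul_add, Polynomial.sum_add_index _ _ _ (by simp) (by intros; ring)]
      rw [hp m, hq m, add_zero]
    | monomial n c =>
      intro m
      have hrep : Γ * Polynomial.monomial n c = Γ * Polynomial.C c * Polynomial.X ^ n := by
        rw [← Polynomial.C_mul_X_pow_eq_monomial]; ring
      have hdegle : (Γ * Polynomial.monomial n c).natDegree < n + (d + 1) := by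
        calc (Γ * Polynomial.monomial n c).natDegree
            ≤ Γ.natDegree + (Polynomial.monomial n c).natDegree :=
              Polynomial.natDegree_mul_le
          _ ≤ d + n := by
              have := Polynomial.natDegree_monomial_le (a := c) (m := n)
              omega
          _ < n + (d + 1) := by omega
      rw [Polynomial.sum_over_range' _ (by simp) _ hdegle]
      rw [Finset.sum_range_add]
      have hfirst : ∑ i ∈ range n, (Γ * Polynomial.monomial n c).coeff i * a (i + m) = 0 := by
        apply Finset.sum_eq_zero
        intro i hi
        simp only [Finset.mem_range] at hi
        rw [hrep, Polynomial.coeff_mul_X_pow', if_neg (by omega)]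
        ring
      rw [hfirst, zero_add]
      have hsecond : ∀ i ∈ range (d + 1),
          (Γ * Polynomial.monomial n c).coeff (n + i) * a (n + i + m)
            = c * (Γ.coeff i * a (i + (n + m))) := by
        intro i _
        rw [hrep, Polynomial.coeff_mul_X_pow', if_pos (by omega)]
        have : n + i - n = i := by omega
        rw [this, Polynomial.coeff_mul_C]
        have : n + i + m = i + (n + m) := by omega
        rw [this]; ring
      rw [Finset.sum_congr rfl hsecond, ← Finset.mul_sum, hstep (n + m), mul_zero]
  -- decompose X^N
  have hΓ1 : Γ ≠ 1 := by
    intro h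
    rw [h, Polynomial.natDegree_one] at hdeg
    omega
  have hdecomp : (Polynomial.X : Polynomial R) ^ N
      = Polynomial.X ^ N %ₘ Γ + Γ * (Polynomial.X ^ N /ₘ Γ) :=
    (Polynomial.modByMonic_add_div _ Γ).symm
  have hL : ∀ (p : Polynomial R), (p.sum fun k c => c * a (k + (j : ℕ))) =
      p.sum fun k c => c * a (k + (j : ℕ)) := fun _ => rfl
  have hX : (((Polynomial.X : Polynomial R) ^ N).sum fun k c => c * a (k + (j : ℕ)))
      = a (N + (j : ℕ)) := by
    rw [Polynomial.X_pow_eq_monomial, Polynomial.sum_monomial_index _ _ (by simp), one_mul]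
  have hsplit : (((Polynomial.X : Polynomial R) ^ N).sum fun k c => c * a (k + (j : ℕ)))
      = ((Polynomial.X ^ N %ₘ Γ).sum fun k c => c * a (k + (j : ℕ))) := by
    conv_lhs => rw [hdecomp]
    rw [Polynomial.sum_add_index _ _ _ (by simp) (by intros; ring), hmul _ (j : ℕ), add_zero]
  have hr : ((Polynomial.X ^ N %ₘ Γ).sum fun k c => c * a (k + (j : ℕ)))
      = ∑ i ∈ range d, (Polynomial.X ^ N %ₘ Γ).coeff i * a (i + (j : ℕ)) := by
    apply Polynomial.sum_over_range' _ (by simp)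
    have := Polynomial.natDegree_modByMonic_lt (Polynomial.X ^ N) hmon hΓ1
    omega
  calc PowerSeries.coeff (R := R) (N + (j : ℕ)) A
      = a (N + (j : ℕ)) := rfl
    _ = ∑ i ∈ range d, (Polynomial.X ^ N %ₘ Γ).coeff i * a (i + (j : ℕ)) := by
        rw [← hX, hsplit, hr]
    _ = ∑ i : Fin d, (Polynomial.X ^ N %ₘ Γ).coeff i * PowerSeries.coeff (R := R) (i + j) A := by
        rw [← Fin.sum_univ_eq_sum_range]
end

section
/- Let Γ ∈ R[x] be monic of degree d, Q(x) = x^d Γ(1/x) its reversal, and a_i the coefficients of 1/Q ∈ R[[x]]. Then the determinant of the d×d Hankel matrix H = (a_{i+j})_{0≤i,j≤d-1} equals ±Γ(0)^{d-1}; in particular H is invertible whenever Γ(0) is a unit. -/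
open Polynomial PowerSeries

lemma sign_revPerm_aux : ∀ n : ℕ,
    Equiv.Perm.sign (Fin.revPerm : Equiv.Perm (Fin n)) = (-1) ^ (n * (n - 1) / 2)
  | 0 => by decide
  | (n+1) => by
    have key : finRotate (n+1) * (Fin.revPerm : Equiv.Perm (Fin (n+1)))
        = Equiv.Perm.decomposeFin.symm (0, (Fin.revPerm : Equiv.Perm (Fin n))) := by
      ext i
      refine Fin.cases ?_ (fun x => ?_) i
      · simp [Fin.rev_zero, finRotate_last]
      · simp only [Equiv.Perm.mul_apply, Fin.revPerm_apply,
          Equiv.Perm.decomposeFin_symm_apply_succ, Equiv.swap_self, Equiv.Perm.coe_mul]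
        rw [Fin.rev_succ, finRotate_succ_apply]
        simp [Fin.ext_iff, Fin.val_add_one, Fin.val_rev]
    have hsign := congrArg Equiv.Perm.sign key
    rw [map_mul, sign_finRotate, Equiv.Perm.decomposeFin.symm_sign, if_pos rfl,
      one_mul, sign_revPerm_aux n] at hsign
    have hmul : ((-1 : ℤˣ) ^ n) * Equiv.Perm.sign (Fin.revPerm : Equiv.Perm (Fin (n+1)))
        = (-1) ^ (n * (n-1) / 2) := hsign
    have : Equiv.Perm.sign (Fin.revPerm : Equiv.Perm (Fin (n+1)))
        = (-1) ^ n * (-1) ^ (n * (n-1) / 2) := by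
      have h2 : ((-1 : ℤˣ) ^ n) * (((-1 : ℤˣ) ^ n)
          * Equiv.Perm.sign (Fin.revPerm : Equiv.Perm (Fin (n+1))))
          = ((-1 : ℤˣ)^n) * (-1) ^ (n * (n-1) / 2) := by rw [hmul]
      rwa [← mul_assoc, ← pow_add, ← two_mul, pow_mul, neg_one_sq, one_pow, one_mul] at h2
    rw [this, ← pow_add, Nat.triangle_succ]
    ring_nf

theorem stmt_11 {R : Type*} [CommRing R] (Γ : Polynomial R) (d : ℕ)
    (hd : 1 ≤ d) (hmon : Γ.Monic) (hdeg : Γ.natDegree = d)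
    (A : PowerSeries R) (hA : (Γ.reverse : PowerSeries R) * A = 1) :
    (Matrix.of fun i j : Fin d =>
        PowerSeries.coeff ((i : ℕ) + (j : ℕ)) A).det
      = (-1) ^ (d * (d - 1) / 2) * (Γ.coeff 0) ^ (d - 1) := by
  obtain ⟨n, rfl⟩ : ∃ n, d = n + 1 := ⟨d - 1, by omega⟩
  set q : ℕ → R := fun t => Γ.reverse.coeff t with hqdef
  set a : ℕ → R := fun t => PowerSeries.coeff t A with hadef
  have hq0 : q 0 = 1 := by
    simpa [hqdef, Polynomial.coeff_zero_reverse] using hmon.leadingCoeff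
  have hqd : q (n + 1) = Γ.coeff 0 := by
    simp [hqdef, Polynomial.coeff_reverse, hdeg, Polynomial.revAt_le]
  have hqtop : ∀ t, n + 1 < t → q t = 0 := by
    intro t ht
    exact Polynomial.coeff_eq_zero_of_natDegree_lt
      (lt_of_le_of_lt (hdeg ▸ Γ.reverse_natDegree_le) ht)
  have hconv : ∀ m : ℕ, (∑ t ∈ Finset.range (m + 1), q t * a (m - t))
      = if m = 0 then 1 else 0 := by
    intro m
    have h := congrArg (PowerSeries.coeff m) hA
    rw [PowerSeries.coeff_mul, PowerSeries.coeff_one,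
      Finset.Nat.sum_antidiagonal_eq_sum_range_succ_mk] at h
    simpa [hqdef, hadef, Polynomial.coeff_coe] using h
  have ha0 : a 0 = 1 := by
    have := hconv 0
    simpa [hq0] using this
  -- matrices
  set H : Matrix (Fin (n+1)) (Fin (n+1)) R :=
    Matrix.of (fun i j : Fin (n+1) => a ((i : ℕ) + (j : ℕ))) with hHdef
  set T : Matrix (Fin (n+1)) (Fin (n+1)) R :=
    Matrix.of (fun i j : Fin (n+1) => if (j : ℕ) ≤ (i : ℕ) then q ((i : ℕ) - (j : ℕ)) else 0)
      with hTdef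
  set B : Matrix (Fin (n+1)) (Fin (n+1)) R :=
    Matrix.of (fun i s : Fin (n+1) =>
      if (s : ℕ) = 0 then (if (i : ℕ) = 0 then 1 else 0) else -q ((i : ℕ) + (s : ℕ)))
      with hBdef
  set C : Matrix (Fin (n+1)) (Fin (n+1)) R :=
    Matrix.of (fun s k : Fin (n+1) =>
      if (s : ℕ) = 0 then (if (k : ℕ) = 0 then (1 : R) else 0)
      else if (s : ℕ) ≤ (k : ℕ) then a ((k : ℕ) - (s : ℕ)) else 0) with hCdef
  have key : T * H = B * C := by
    ext i k
    rw [Matrix.mul_apply, Matrix.mul_apply]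
    have hik : (i : ℕ) ≤ n := by omega
    have hkk : (k : ℕ) ≤ n := by omega
    -- LHS
    have e1 : (∑ j : Fin (n+1), T i j * H j k)
        = ∑ j ∈ Finset.range (n+1),
            (if j ≤ (i : ℕ) then q ((i : ℕ) - j) else 0) * a (j + (k : ℕ)) := by
      rw [← Fin.sum_univ_eq_sum_range
        (fun j => (if j ≤ (i : ℕ) then q ((i : ℕ) - j) else 0) * a (j + (k : ℕ)))]
      rfl
    have e2 : (∑ j ∈ Finset.range (n+1),
            (if j ≤ (i : ℕ) then q ((i : ℕ) - j) else 0) * a (j + (k : ℕ)))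
        = ∑ j ∈ Finset.range ((i : ℕ) + 1), q ((i : ℕ) - j) * a (j + (k : ℕ)) := by
      rw [Finset.sum_congr rfl (fun j _ => ite_mul (j ≤ (i:ℕ)) (q ((i:ℕ) - j)) 0 (a (j + (k:ℕ))))]
      rw [← Finset.sum_subset (Finset.range_subset_range.mpr (by omega :
          (i : ℕ) + 1 ≤ n + 1))]
      · exact Finset.sum_congr rfl (fun j hj => by
          rw [if_pos (by simpa using Nat.lt_succ_iff.mp (Finset.mem_range.mp hj))])
      · intro j hj1 hj2
        have hni : ¬ j ≤ (i:ℕ) := fun h => hj2 (Finset.mem_range.mpr (by omega))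
        rw [if_neg hni, zero_mul]
    have e3 : (∑ j ∈ Finset.range ((i : ℕ) + 1), q ((i : ℕ) - j) * a (j + (k : ℕ)))
        = ∑ t ∈ Finset.range ((i : ℕ) + 1), q t * a ((i : ℕ) + (k : ℕ) - t) := by
      rw [← Finset.sum_range_reflect (fun t => q t * a ((i : ℕ) + (k : ℕ) - t)) ((i:ℕ)+1)]
      refine Finset.sum_congr rfl (fun j hj => ?_)
      have hji : j ≤ (i : ℕ) := Nat.lt_succ_iff.mp (Finset.mem_range.mp hj)
      have h1 : (i : ℕ) + 1 - 1 - j = (i : ℕ) - j := by omega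
      have h2 : (i : ℕ) + (k : ℕ) - ((i : ℕ) - j) = j + (k : ℕ) := by omega
      rw [h1, h2]
    have e4 : (∑ t ∈ Finset.range ((i : ℕ) + 1), q t * a ((i : ℕ) + (k : ℕ) - t))
        = (if (i : ℕ) + (k : ℕ) = 0 then 1 else 0)
          - ∑ s ∈ Finset.range (k : ℕ), q ((i:ℕ) + 1 + s) * a ((k:ℕ) - 1 - s) := by
      have hsplit := Finset.sum_Ico_consecutive (fun t => q t * a ((i : ℕ) + (k : ℕ) - t))
        (Nat.zero_le ((i:ℕ)+1)) (by omega : (i:ℕ)+1 ≤ (i:ℕ)+(k:ℕ)+1)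
      rw [← Finset.range_eq_Ico, ← Finset.range_eq_Ico] at hsplit
      beta_reduce at hsplit
      rw [hconv ((i:ℕ)+(k:ℕ))] at hsplit
      have hIco2 : (∑ t ∈ Finset.Ico ((i:ℕ)+1) ((i:ℕ)+(k:ℕ)+1), q t * a ((i:ℕ)+(k:ℕ) - t))
          = ∑ s ∈ Finset.range (k : ℕ), q ((i:ℕ) + 1 + s) * a ((k:ℕ) - 1 - s) := by
        rw [Finset.sum_Ico_eq_sum_range]
        refine Finset.sum_congr (by congr 1; omega) (fun s hs => ?_)
        have : (i:ℕ) + (k:ℕ) - ((i:ℕ) + 1 + s) = (k:ℕ) - 1 - s := by omega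
        rw [this]
      rw [hIco2] at hsplit
      have := hsplit
      linear_combination this
    -- RHS
    have f1 : (∑ s : Fin (n+1), B i s * C s k)
        = ∑ s ∈ Finset.range (n+1),
            (if s = 0 then (if (i:ℕ) = 0 then (1:R) else 0) else -q ((i:ℕ) + s))
            * (if s = 0 then (if (k:ℕ) = 0 then (1:R) else 0)
               else if s ≤ (k:ℕ) then a ((k:ℕ) - s) else 0) := by
      rw [← Fin.sum_univ_eq_sum_range
        (fun s => (if s = 0 then (if (i:ℕ) = 0 then (1:R) else 0) else -q ((i:ℕ) + s))
            * (if s = 0 then (if (k:ℕ) = 0 then (1:R) else 0)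
               else if s ≤ (k:ℕ) then a ((k:ℕ) - s) else 0))]
      rfl
    have f2 : (∑ s ∈ Finset.range (n+1),
            (if s = 0 then (if (i:ℕ) = 0 then (1:R) else 0) else -q ((i:ℕ) + s))
            * (if s = 0 then (if (k:ℕ) = 0 then (1:R) else 0)
               else if s ≤ (k:ℕ) then a ((k:ℕ) - s) else 0))
        = (if (i:ℕ) = 0 then (1:R) else 0) * (if (k:ℕ) = 0 then (1:R) else 0)
          + ∑ s ∈ Finset.range n,
              (-q ((i:ℕ) + (s+1))) * (if s + 1 ≤ (k:ℕ) then a ((k:ℕ) - (s+1)) else 0) := by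
      rw [Finset.sum_range_succ']
      rw [Finset.sum_congr rfl (fun x _ => by
        rw [if_neg (Nat.succ_ne_zero x), if_neg (Nat.succ_ne_zero x)])]
      rw [if_pos rfl, if_pos rfl]
      ring
    have f3 : (∑ s ∈ Finset.range n,
              (-q ((i:ℕ) + (s+1))) * (if s + 1 ≤ (k:ℕ) then a ((k:ℕ) - (s+1)) else 0))
        = -∑ s ∈ Finset.range (k : ℕ), q ((i:ℕ) + 1 + s) * a ((k:ℕ) - 1 - s) := by
      rw [← Finset.sum_subset (Finset.range_subset_range.mpr hkk)]
      · rw [← Finset.sum_neg_distrib]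
        refine Finset.sum_congr rfl (fun s hs => ?_)
        have hsk : s < (k:ℕ) := Finset.mem_range.mp hs
        rw [if_pos (by omega)]
        have h1 : (i:ℕ) + (s+1) = (i:ℕ) + 1 + s := by omega
        have h2 : (k:ℕ) - (s+1) = (k:ℕ) - 1 - s := by omega
        rw [h1, h2]; ring
      · intro s _ hs
        rw [if_neg (by intro h; exact hs (Finset.mem_range.mpr (by omega)))]
        simp
    rw [e1, e2, e3, e4, f1, f2, f3]
    have hdelta : (if (i:ℕ) + (k:ℕ) = 0 then (1:R) else 0)
        = (if (i:ℕ) = 0 then (1:R) else 0) * (if (k:ℕ) = 0 then (1:R) else 0) := by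
      by_cases h1 : (i:ℕ) = 0 <;> by_cases h2 : (k:ℕ) = 0 <;>
        simp [h1, h2] <;> omega
    rw [hdelta]; ring
  -- determinants
  have hdetT : T.det = 1 := by
    rw [Matrix.det_of_lowerTriangular T (by
      intro x y hxy
      have : (y : ℕ) > (x : ℕ) := hxy
      simp only [hTdef, Matrix.of_apply]
      rw [if_neg (by omega)])]
    refine Finset.prod_eq_one (fun x _ => ?_)
    simp [hTdef, hq0]
  have hdetC : C.det = 1 := by
    rw [Matrix.det_of_upperTriangular (by
      intro x y hxy
      have hlt : (y : ℕ) < (x : ℕ) := hxy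
      simp only [hCdef, Matrix.of_apply]
      rw [if_neg (by omega), if_neg (by omega)])]
    refine Finset.prod_eq_one (fun x _ => ?_)
    simp only [hCdef, Matrix.of_apply]
    by_cases hx : (x : ℕ) = 0
    · rw [if_pos hx, if_pos hx]
    · rw [if_neg hx, if_pos le_rfl, Nat.sub_self, ha0]
  set ρ : Equiv.Perm (Fin (n+1)) :=
    Equiv.Perm.decomposeFin.symm (0, (Fin.revPerm : Equiv.Perm (Fin n))) with hρdef
  have hρval : ∀ s : Fin (n+1),
      ((ρ s : Fin (n+1)) : ℕ) = if (s : ℕ) = 0 then 0 else n + 1 - (s : ℕ) := by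
    intro s
    refine Fin.cases ?_ (fun x => ?_) s
    · simp [hρdef]
    · have : ρ x.succ = (Fin.revPerm x).succ := by
        simp [hρdef, Equiv.Perm.decomposeFin_symm_apply_succ]
      rw [this]
      simp only [Fin.val_succ, Fin.revPerm_apply, Fin.val_rev]
      rw [if_neg (by omega)]
      omega
  have hsignρ : Equiv.Perm.sign ρ = (-1) ^ (n * (n-1) / 2) := by
    rw [hρdef, Equiv.Perm.decomposeFin.symm_sign, if_pos rfl, one_mul, sign_revPerm_aux]
  have hdetB' : (B.submatrix id ρ).det = (-Γ.coeff 0) ^ n := by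
    rw [Matrix.det_of_upperTriangular (by
      intro x y hxy
      have hlt : (y : ℕ) < (x : ℕ) := hxy
      simp only [Matrix.submatrix_apply, id_eq, hBdef, Matrix.of_apply]
      by_cases hy : (y : ℕ) = 0
      · rw [hρval y, if_pos hy, if_pos rfl, if_neg (by omega)]
      · have hys : (y : ℕ) ≤ n := by omega
        rw [hρval y, if_neg hy, if_neg (by omega)]
        rw [hqtop _ (by omega), neg_zero])]
    rw [Fin.prod_univ_succ]
    have h0 : B.submatrix id ρ 0 0 = 1 := by
      have h00 : ((ρ 0 : Fin (n+1)) : ℕ) = 0 := by rw [hρval 0]; simp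
      simp only [Matrix.submatrix_apply, id_eq, hBdef, Matrix.of_apply, h00]
      simp
    rw [h0, one_mul]
    have hsucc : ∀ x : Fin n, B.submatrix id ρ x.succ x.succ = -Γ.coeff 0 := by
      intro x
      simp only [Matrix.submatrix_apply, id_eq, hBdef, Matrix.of_apply]
      have hxs : (x.succ : ℕ) = (x : ℕ) + 1 := rfl
      have hxle : (x : ℕ) < n := x.isLt
      have hc1 : (if ((x:ℕ)+1) = 0 then 0 else n + 1 - ((x:ℕ)+1)) = n + 1 - ((x:ℕ)+1) :=
        if_neg (by omega)
      rw [hρval x.succ, hxs, hc1, if_neg (show ¬(n + 1 - ((x:ℕ)+1) = 0) by omega)]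
      have : (x : ℕ) + 1 + (n + 1 - ((x : ℕ) + 1)) = n + 1 := by omega
      rw [this, hqd]
    rw [Finset.prod_congr rfl (fun x _ => hsucc x)]
    simp
  have hdetB : B.det = ((((-1 : ℤˣ) ^ (n * (n-1) / 2) : ℤˣ) : ℤ) : R) * (-Γ.coeff 0) ^ n := by
    have hp := Matrix.det_permute' ρ B
    rw [hdetB', hsignρ] at hp
    have hsq : ((((-1 : ℤˣ) ^ (n * (n-1) / 2) : ℤˣ) : ℤ) : R)
        * ((((-1 : ℤˣ) ^ (n * (n-1) / 2) : ℤˣ) : ℤ) : R) = 1 := by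
      rw [← Int.cast_mul, ← Units.val_mul, ← sq, ← pow_mul]
      rw [mul_comm (n * (n-1) / 2) 2, pow_mul, neg_one_sq, one_pow]
      simp
    calc B.det = ((((-1 : ℤˣ) ^ (n * (n-1) / 2) : ℤˣ) : ℤ) : R)
          * (((((-1 : ℤˣ) ^ (n * (n-1) / 2) : ℤˣ) : ℤ) : R) * B.det) := by
            rw [← mul_assoc, hsq, one_mul]
      _ = _ := by rw [← hp]
  have hH : H.det = B.det := by
    have h1 := congrArg Matrix.det key
    rw [Matrix.det_mul, Matrix.det_mul, hdetT, hdetC, one_mul, mul_one] at h1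
    exact h1
  show H.det = _
  rw [hH, hdetB]
  have hcast : ((((-1 : ℤˣ) ^ (n * (n-1) / 2) : ℤˣ) : ℤ) : R) = (-1) ^ (n * (n-1) / 2) := by
    push_cast
    simp
  have hexp : (n + 1) * n / 2 = n * (n - 1) / 2 + n := by
    have := Nat.triangle_succ n
    simpa using this
  rw [hcast, Nat.add_sub_cancel, hexp, pow_add, neg_pow]
  ring
end

section
/- Let (u_n) satisfy the order-d recurrence u_{n+d} = Σ c_i u_{n+i} with characteristic polynomial Γ(x) = x^d - Σ c_i x^i, and let x^N mod Γ = Σ_{i=0}^{d-1} r_i x^i. Then u_N = Σ_{i=0}^{d-1} r_i u_i. -/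
open Polynomial

theorem stmt_13 {R : Type*} [CommRing R] (d N : ℕ) (hd : 1 ≤ d) (c : Fin d → R)
    (u : ℕ → R) (hu : ∀ n : ℕ, u (n + d) = ∑ i : Fin d, c i * u (n + i)) :
    u N = ∑ i ∈ Finset.range d,
      (Polynomial.X ^ N %ₘ
        (Polynomial.X ^ d - ∑ i : Fin d, Polynomial.C (c i) * Polynomial.X ^ (i : ℕ))).coeff i
      * u i := by
  nontriviality R
  set Γ : R[X] := X ^ d - ∑ i : Fin d, C (c i) * X ^ (i : ℕ) with hΓ
  -- degree of the lower part
  have hdegsum : (∑ i : Fin d, C (c i) * X ^ (i : ℕ)).degree ≤ ((d - 1 : ℕ) : WithBot ℕ) := by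
    refine (Polynomial.degree_sum_le _ _).trans ?_
    apply Finset.sup_le
    intro i _
    refine (degree_C_mul_X_pow_le _ _).trans ?_
    exact_mod_cast Nat.cast_le.mpr (Nat.le_sub_one_of_lt i.2)
  have hmonic : Γ.Monic := by
    have : Γ = X ^ (d - 1 + 1) - ∑ i : Fin d, C (c i) * X ^ (i : ℕ) := by
      rw [hΓ, Nat.sub_add_cancel hd]
    rw [this]
    exact monic_X_pow_sub (hdegsum.trans_lt (by exact_mod_cast Nat.lt_succ_self _))
  have hΓdeg : Γ.degree = d := by
    rw [hΓ]
    rw [degree_sub_eq_left_of_degree_lt]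
    · exact degree_X_pow d
    · rw [degree_X_pow]
      exact lt_of_le_of_lt hdegsum (by exact_mod_cast Nat.sub_lt hd one_pos)
  -- the linear functional
  set φ : R[X] →ₗ[R] R :=
    Polynomial.lsum (fun n => LinearMap.toSpanSingleton R R (u n)) with hφ
  have hφmon : ∀ (n : ℕ) (a : R), φ (monomial n a) = a * u n := by
    intro n a
    simp [hφ, Polynomial.lsum_apply, Polynomial.sum_monomial_index,
      LinearMap.toSpanSingleton_apply, smul_eq_mul]
  have hmul : ∀ q : R[X], φ (Γ * q) = 0 := by
    intro q
    induction q using Polynomial.induction_on' with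
    | add p q hp hq => rw [mul_add, map_add, hp, hq, add_zero]
    | monomial n a =>
      have hexp : Γ * monomial n a
          = monomial (n + d) a - ∑ i : Fin d, monomial (n + i) (c i * a) := by
        rw [hΓ, sub_mul, Finset.sum_mul]
        congr 1
        · rw [X_pow_eq_monomial, monomial_mul_monomial, one_mul, Nat.add_comm]
        · refine Finset.sum_congr rfl fun i _ => ?_
          rw [C_mul_X_pow_eq_monomial, monomial_mul_monomial, Nat.add_comm]
      rw [hexp, map_sub, map_sum, hφmon]
      have : ∀ i : Fin d, φ (monomial (n + (i : ℕ)) (c i * a)) = c i * a * u (n + i) :=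
        fun i => hφmon _ _
      simp_rw [this]
      rw [hu n, Finset.mul_sum]
      rw [sub_eq_zero]
      refine Finset.sum_congr rfl fun i _ => by ring
  have hXN : φ (X ^ N : R[X]) = u N := by
    rw [X_pow_eq_monomial, hφmon, one_mul]
  have key := Polynomial.modByMonic_add_div (X ^ N : R[X]) Γ
  have h2 : u N = φ (X ^ N %ₘ Γ) := by
    rw [← hXN]
    conv_lhs => rw [← key]
    rw [map_add, hmul, add_zero]
  rw [h2]
  have hndeg : (X ^ N %ₘ Γ).natDegree < d := by
    have h1 : Γ ≠ 1 := by
      intro h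
      rw [h, degree_one] at hΓdeg
      exact_mod_cast absurd hΓdeg.symm (by simpa using (Nat.one_le_iff_ne_zero.mp hd))
    have := Polynomial.natDegree_modByMonic_lt (X ^ N) hmonic h1
    have hnd : Γ.natDegree = d := natDegree_eq_of_degree_eq_some hΓdeg
    omega
  have : φ (X ^ N %ₘ Γ) = (X ^ N %ₘ Γ).sum fun n a => a * u n := by
    simp [hφ, Polynomial.lsum_apply, LinearMap.toSpanSingleton_apply, smul_eq_mul]
  rw [this]
  exact Polynomial.sum_over_range' (f := fun n a => a * u n) _ (fun n => zero_mul _) d hndeg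
end

section
/- For all n ≥ 0 and integers a, b, c: the coefficient of x^{2m} in the power series (a+bx)/(1-cx+x²) equals the coefficient of x^m in (a+(bc+a)x)/(1-(c²-2)x+x²), and the coefficient of x^{2m+1} in (a+bx)/(1-cx+x²) equals the coefficient of x^m in ((ac+b)+bx)/(1-(c²-2)x+x²). -/
open PowerSeries

private noncomputable def F (a b c : ℤ) : PowerSeries ℤ :=
  (PowerSeries.C (R := ℤ) a + PowerSeries.C (R := ℤ) b * PowerSeries.X) *
    PowerSeries.invOfUnit (1 - PowerSeries.C (R := ℤ) c * PowerSeries.X + PowerSeries.X ^ 2) 1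

private lemma F_mul (a b c : ℤ) :
    F a b c * (1 - PowerSeries.C (R := ℤ) c * PowerSeries.X + PowerSeries.X ^ 2)
      = PowerSeries.C (R := ℤ) a + PowerSeries.C (R := ℤ) b * PowerSeries.X := by
  have hg : constantCoeff (R := ℤ) (1 - PowerSeries.C (R := ℤ) c * PowerSeries.X + PowerSeries.X ^ 2) = (1 : ℤˣ) := by
    simp
  rw [F, mul_assoc, mul_comm (invOfUnit _ _), PowerSeries.mul_invOfUnit _ _ hg, mul_one]

private lemma F0 (a b c : ℤ) : coeff (R := ℤ) 0 (F a b c) = a := by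
  have h := congrArg (coeff (R := ℤ) 0) (F_mul a b c)
  simpa [coeff_zero_eq_constantCoeff, map_sub, map_add] using h

private lemma F1 (a b c : ℤ) : coeff (R := ℤ) 1 (F a b c) = b + c * a := by
  have h := congrArg (coeff (R := ℤ) 1) (F_mul a b c)
  have e : F a b c * (1 - PowerSeries.C (R := ℤ) c * PowerSeries.X + PowerSeries.X ^ 2)
      = F a b c - PowerSeries.C (R := ℤ) c * (F a b c * PowerSeries.X)
        + (F a b c * PowerSeries.X) * PowerSeries.X := by ring
  rw [e] at h
  simp only [map_add, map_sub, coeff_C_mul, coeff_succ_mul_X, map_mul, constantCoeff_X,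
    mul_zero, coeff_C, coeff_one_X, coeff_zero_mul_X, F0] at h
  norm_num at h
  linarith

private lemma Frec (a b c : ℤ) (n : ℕ) :
    coeff (R := ℤ) (n + 2) (F a b c) = c * coeff (R := ℤ) (n + 1) (F a b c) - coeff (R := ℤ) n (F a b c) := by
  have h := congrArg (coeff (R := ℤ) (n + 2)) (F_mul a b c)
  have e : F a b c * (1 - PowerSeries.C (R := ℤ) c * PowerSeries.X + PowerSeries.X ^ 2)
      = F a b c - PowerSeries.C (R := ℤ) c * (F a b c * PowerSeries.X)
        + (F a b c * PowerSeries.X) * PowerSeries.X := by ring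
  rw [e] at h
  simp only [map_add, map_sub, coeff_C_mul, coeff_succ_mul_X, coeff_C] at h
  simp at h
  linarith

private lemma Frec2 (a b c : ℤ) (n : ℕ) :
    coeff (R := ℤ) (n + 4) (F a b c)
      = (c ^ 2 - 2) * coeff (R := ℤ) (n + 2) (F a b c) - coeff (R := ℤ) n (F a b c) := by
  have h1 := Frec a b c (n + 2)
  have h2 := Frec a b c (n + 1)
  have h3 := Frec a b c n
  have e1 : n + 2 + 2 = n + 4 := by omega
  have e2 : n + 2 + 1 = n + 3 := by omega
  have e3 : n + 1 + 2 = n + 3 := by omega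
  have e4 : n + 1 + 1 = n + 2 := by omega
  rw [e1, e2] at h1; rw [e3, e4] at h2
  linear_combination h1 + c * h2 + h3

private lemma key (a b c : ℤ) (m : ℕ) :
    coeff (R := ℤ) (2 * m) (F a b c) = coeff (R := ℤ) m (F a (b * c + a) (c ^ 2 - 2)) ∧
    coeff (R := ℤ) (2 * m + 1) (F a b c) = coeff (R := ℤ) m (F (a * c + b) b (c ^ 2 - 2)) := by
  induction m using Nat.twoStepInduction with
  | zero =>
    constructor
    · simp only [Nat.mul_zero, F0]
    · simpa only [Nat.mul_zero, Nat.zero_add, F1, F0] using by ring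
  | one =>
    have h2 := Frec a b c 0
    have h3 := Frec a b c 1
    constructor
    · show coeff (R := ℤ) 2 (F a b c) = coeff (R := ℤ) 1 _
      rw [show (2:ℕ) = 0 + 2 from rfl, Frec, F1, F0, F1]; ring
    · show coeff (R := ℤ) 3 (F a b c) = coeff (R := ℤ) 1 _
      rw [show (3:ℕ) = 1 + 2 from rfl, Frec, show (1+1:ℕ) = 0 + 2 from rfl, Frec, F1, F0, F1]
      ring
  | more m ih1 ih2 =>
    obtain ⟨e1, o1⟩ := ih1
    obtain ⟨e2, o2⟩ := ih2
    constructor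
    · have h := Frec2 a b c (2 * m)
      have h' := Frec a (b * c + a) (c ^ 2 - 2) m
      rw [show 2 * m + 4 = 2 * (m + 2) from by omega, show 2 * m + 2 = 2 * (m + 1) from by omega] at h
      rw [h, h', e1, e2]
    · have h := Frec2 a b c (2 * m + 1)
      have h' := Frec (a * c + b) b (c ^ 2 - 2) m
      rw [show 2 * m + 1 + 4 = 2 * (m + 2) + 1 from by omega,
        show 2 * m + 1 + 2 = 2 * (m + 1) + 1 from by omega] at h
      rw [h, h', o1, o2]

theorem stmt_16 (a b c : ℤ) (m : ℕ) :
    PowerSeries.coeff (R := ℤ) (2 * m)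
      ((PowerSeries.C (R := ℤ) a + PowerSeries.C (R := ℤ) b * PowerSeries.X) *
        PowerSeries.invOfUnit (1 - PowerSeries.C (R := ℤ) c * PowerSeries.X + PowerSeries.X ^ 2) 1)
    = PowerSeries.coeff (R := ℤ) m
      ((PowerSeries.C (R := ℤ) a + PowerSeries.C (R := ℤ) (b * c + a) * PowerSeries.X) *
        PowerSeries.invOfUnit
          (1 - PowerSeries.C (R := ℤ) (c ^ 2 - 2) * PowerSeries.X + PowerSeries.X ^ 2) 1) ∧
    PowerSeries.coeff (R := ℤ) (2 * m + 1)
      ((PowerSeries.C (R := ℤ) a + PowerSeries.C (R := ℤ) b * PowerSeries.X) *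
        PowerSeries.invOfUnit (1 - PowerSeries.C (R := ℤ) c * PowerSeries.X + PowerSeries.X ^ 2) 1)
    = PowerSeries.coeff (R := ℤ) m
      ((PowerSeries.C (R := ℤ) (a * c + b) + PowerSeries.C (R := ℤ) b * PowerSeries.X) *
        PowerSeries.invOfUnit
          (1 - PowerSeries.C (R := ℤ) (c ^ 2 - 2) * PowerSeries.X + PowerSeries.X ^ 2) 1) := by
  exact key a b c m
end

section
/- Let Q ∈ R[x] with Q(0) invertible and deg Q = d, and define V ∈ R[x] by V(x²) = Q(x)Q(-x). Write 1/Q = Σ a_i x^i and 1/V = Σ b_i x^i. Then for all N ≥ 2d-1: the window (a_{N-d+1}, ..., a_N) is determined by (a_N, ..., a_{N-d+1}) = coefficients d through 2d-1 of the product Q(-x)·S(x), where S(x) = x·W(x²) if N is even and S(x) = W(x²) if N is odd, with W(x) = Σ_{i=0}^{d-1} b_{⌊N/2⌋-d+1+i} x^i. -/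
open Polynomial PowerSeries

section Helpers
variable {R : Type*} [CommRing R]

variable {R : Type*} [CommRing R]

noncomputable def evenExt (f : PowerSeries R) : PowerSeries R :=
  PowerSeries.mk fun n => if 2 ∣ n then PowerSeries.coeff (n / 2) f else 0

lemma coeff_evenExt (f : PowerSeries R) (n : ℕ) :
    PowerSeries.coeff n (evenExt f) = if 2 ∣ n then PowerSeries.coeff (n / 2) f else 0 :=
  PowerSeries.coeff_mk _ _

lemma sum_even_helper (M : ℕ) (F : ℕ → R) :
    ∑ k ∈ Finset.range (2 * M + 2), (if 2 ∣ k then F (k / 2) else 0)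
      = ∑ u ∈ Finset.range (M + 1), F u := by
  induction M with
  | zero => simp [Finset.sum_range_succ]
  | succ M ih =>
    have h2 : 2 * (M + 1) + 2 = (2 * M + 2) + 1 + 1 := by ring
    rw [h2, Finset.sum_range_succ, Finset.sum_range_succ, ih]
    rw [if_neg (by omega : ¬ 2 ∣ 2 * M + 2 + 1), add_zero,
      if_pos (by omega : 2 ∣ 2 * M + 2), (by omega : (2 * M + 2) / 2 = M + 1),
      Finset.sum_range_succ, Finset.sum_range_succ, Finset.sum_range_succ]

lemma evenExt_mul (f g : PowerSeries R) : evenExt (f * g) = evenExt f * evenExt g := by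
  ext n
  rw [coeff_evenExt]
  conv_rhs => rw [PowerSeries.coeff_mul,
    Finset.Nat.sum_antidiagonal_eq_sum_range_succ
      (fun a b => (PowerSeries.coeff a) (evenExt f) * (PowerSeries.coeff b) (evenExt g))]
  simp only [Nat.succ_eq_add_one, coeff_evenExt]
  symm
  by_cases he : 2 ∣ n
  · obtain ⟨M, hM⟩ := he
    subst hM
    rw [if_pos (by omega : 2 ∣ 2 * M), (by omega : 2 * M / 2 = M), PowerSeries.coeff_mul,
      Finset.Nat.sum_antidiagonal_eq_sum_range_succ
        (fun a b => (PowerSeries.coeff a) f * (PowerSeries.coeff b) g)]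
    simp only [Nat.succ_eq_add_one]
    rw [← sum_even_helper M (fun u => (PowerSeries.coeff u) f * (PowerSeries.coeff (M - u)) g)]
    symm
    rw [(by ring : 2 * M + 2 = (2 * M + 1) + 1), Finset.sum_range_succ,
      if_neg (by omega : ¬ 2 ∣ 2 * M + 1), add_zero]
    apply Finset.sum_congr rfl
    intro k hk
    simp only [Finset.mem_range] at hk
    by_cases h : 2 ∣ k
    · rw [if_pos h, if_pos h, if_pos (by omega : 2 ∣ 2 * M - k),
        (by omega : 2 * M - k = 2 * (M - k / 2)), (by omega : 2 * (M - k / 2) / 2 = M - k / 2)]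
    · rw [if_neg h, if_neg h, zero_mul]
  · rw [if_neg he]
    apply Finset.sum_eq_zero
    intro k hk
    simp only [Finset.mem_range] at hk
    by_cases h : 2 ∣ k
    · rw [if_neg (by omega : ¬ 2 ∣ n - k), mul_zero]
    · rw [if_neg h, zero_mul]

lemma evenExt_one : evenExt (1 : PowerSeries R) = 1 := by
  ext n
  rw [coeff_evenExt]
  by_cases h0 : n = 0
  · subst h0; norm_num
  · conv_rhs => rw [PowerSeries.coeff_one]
    rw [if_neg h0]
    by_cases h : 2 ∣ n
    · rw [if_pos h, PowerSeries.coeff_one, if_neg (by omega : ¬ n / 2 = 0)]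
    · rw [if_neg h]

lemma coe_comp_X_sq (P : Polynomial R) :
    ((P.comp (Polynomial.X ^ 2) : Polynomial R) : PowerSeries R) = evenExt (P : PowerSeries R) := by
  ext n
  rw [Polynomial.coeff_coe, coeff_evenExt, ← Polynomial.expand_eq_comp_X_pow,
    Polynomial.coeff_expand (by norm_num)]
  split_ifs with h
  · rw [Polynomial.coeff_coe]
  · rfl


lemma coeff_Wcomp (β : ℕ → R) (d t : ℕ) :
    ((∑ j ∈ Finset.range d, Polynomial.C (β j) * Polynomial.X ^ j).comp
        (Polynomial.X ^ 2)).coeff t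
      = if 2 ∣ t ∧ t / 2 < d then β (t / 2) else 0 := by
  rw [← Polynomial.expand_eq_comp_X_pow, Polynomial.coeff_expand (by norm_num : 0 < 2)]
  have hW : ∀ s, (∑ j ∈ Finset.range d, Polynomial.C (β j) * Polynomial.X ^ j).coeff s
      = if s < d then β s else 0 := by
    intro s
    rw [Polynomial.finset_sum_coeff]
    simp_rw [Polynomial.coeff_C_mul, Polynomial.coeff_X_pow, mul_ite, mul_one, mul_zero]
    rw [Finset.sum_ite_eq (Finset.range d) s β]
    simp [Finset.mem_range]
  by_cases h : 2 ∣ t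
  · rw [if_pos h, hW]
    by_cases h2 : t / 2 < d
    · rw [if_pos h2, if_pos ⟨h, h2⟩]
    · rw [if_neg h2, if_neg (by tauto)]
  · rw [if_neg h, if_neg (by tauto)]

end Helpers

theorem stmt_18 {R : Type*} [CommRing R] (Q V : Polynomial R) (d N : ℕ)
    (hd : 1 ≤ d) (hdeg : Q.natDegree = d) (hQ0 : IsUnit (Q.coeff 0))
    (hV : Q * Q.comp (-Polynomial.X) = V.comp (Polynomial.X ^ 2))
    (A B : PowerSeries R)
    (hA : (Q : PowerSeries R) * A = 1) (hB : (V : PowerSeries R) * B = 1)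
    (hN : 2 * d - 1 ≤ N) :
    ∀ i < d,
      PowerSeries.coeff (N + 1 - d + i) A =
        (Q.comp (-Polynomial.X) *
          (if Even N then
              Polynomial.X *
                (∑ j ∈ Finset.range d,
                  Polynomial.C (PowerSeries.coeff (N / 2 + 1 - d + j) B)
                    * Polynomial.X ^ j).comp (Polynomial.X ^ 2)
            else
              (∑ j ∈ Finset.range d,
                Polynomial.C (PowerSeries.coeff (N / 2 + 1 - d + j) B)
                  * Polynomial.X ^ j).comp (Polynomial.X ^ 2))).coeff (d + i) := by
  intro i hi
  set P : Polynomial R := Q.comp (-Polynomial.X) with hPdef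
  set S : Polynomial R := (if Even N then
              Polynomial.X *
                (∑ j ∈ Finset.range d,
                  Polynomial.C (PowerSeries.coeff (N / 2 + 1 - d + j) B)
                    * Polynomial.X ^ j).comp (Polynomial.X ^ 2)
            else
              (∑ j ∈ Finset.range d,
                Polynomial.C (PowerSeries.coeff (N / 2 + 1 - d + j) B)
                  * Polynomial.X ^ j).comp (Polynomial.X ^ 2)) with hSdef
  set m : ℕ := N + 1 - d + i with hm
  have hPd : P.natDegree ≤ d := by
    refine Polynomial.natDegree_comp_le.trans ?_
    have h1 : (-Polynomial.X : Polynomial R).natDegree ≤ 1 := by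
      rw [Polynomial.natDegree_neg]; exact Polynomial.natDegree_X_le
    calc Q.natDegree * (-Polynomial.X : Polynomial R).natDegree ≤ d * 1 :=
          Nat.mul_le_mul (le_of_eq hdeg) h1
    _ = d := mul_one d
  have hQC : (Q : PowerSeries R) * ((P : PowerSeries R) * evenExt B) = 1 := by
    rw [← mul_assoc, ← Polynomial.coe_mul, hV, coe_comp_X_sq, ← evenExt_mul, hB, evenExt_one]
  have hAeq : A = (P : PowerSeries R) * evenExt B := by
    calc A = A * ((Q : PowerSeries R) * ((P : PowerSeries R) * evenExt B)) := by
            rw [hQC, mul_one]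
    _ = ((Q : PowerSeries R) * A) * ((P : PowerSeries R) * evenExt B) := by ring
    _ = (P : PowerSeries R) * evenExt B := by rw [hA, one_mul]
  have hmd : d + i ≤ m := by omega
  have hL : PowerSeries.coeff m ((P : PowerSeries R) * evenExt B)
      = ∑ k ∈ Finset.range (d + 1),
          P.coeff k * (if 2 ∣ (m - k) then PowerSeries.coeff ((m - k) / 2) B else 0) := by
    rw [PowerSeries.coeff_mul,
      Finset.Nat.sum_antidiagonal_eq_sum_range_succ
        (fun a b => PowerSeries.coeff a (P : PowerSeries R) * PowerSeries.coeff b (evenExt B))]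
    simp only [Nat.succ_eq_add_one, coeff_evenExt, Polynomial.coeff_coe]
    symm
    apply Finset.sum_subset
    · exact Finset.range_subset_range.mpr (by omega)
    · intro k _ hk
      simp only [Finset.mem_range] at hk
      rw [Polynomial.coeff_eq_zero_of_natDegree_lt (by omega : P.natDegree < k), zero_mul]
  have hR : (P * S).coeff (d + i)
      = ∑ k ∈ Finset.range (d + 1), P.coeff k * S.coeff (d + i - k) := by
    rw [Polynomial.coeff_mul,
      Finset.Nat.sum_antidiagonal_eq_sum_range_succ (fun a b => P.coeff a * S.coeff b)]
    simp only [Nat.succ_eq_add_one]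
    symm
    apply Finset.sum_subset
    · exact Finset.range_subset_range.mpr (by omega)
    · intro k _ hk
      simp only [Finset.mem_range] at hk
      rw [Polynomial.coeff_eq_zero_of_natDegree_lt (by omega : P.natDegree < k), zero_mul]
  rw [hAeq, hL, hR]
  apply Finset.sum_congr rfl
  intro k hk
  simp only [Finset.mem_range] at hk
  congr 1
  rcases Nat.even_or_odd N with he | ho
  · -- N even
    have hN2 : N % 2 = 0 := Nat.even_iff.mp he
    rw [hSdef, if_pos he]
    by_cases h0 : d + i - k = 0
    · rw [if_neg (show ¬ 2 ∣ m - k by omega), h0, Polynomial.mul_coeff_zero,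
        Polynomial.coeff_X_zero, zero_mul]
    · obtain ⟨s, hdk⟩ : ∃ s, d + i - k = s + 1 := ⟨(d + i - k) - 1, by omega⟩
      rw [hdk, Polynomial.coeff_X_mul, coeff_Wcomp]
      by_cases hs : 2 ∣ s
      · rw [if_pos (show 2 ∣ m - k by omega),
          if_pos (show 2 ∣ s ∧ s / 2 < d from ⟨hs, by omega⟩),
          (show N / 2 + 1 - d + s / 2 = (m - k) / 2 by omega)]
      · rw [if_neg (show ¬ 2 ∣ m - k by omega),
          if_neg (show ¬ (2 ∣ s ∧ s / 2 < d) from fun h => hs h.1)]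
  · -- N odd
    have hN2 : N % 2 = 1 := Nat.odd_iff.mp ho
    rw [hSdef, if_neg (Nat.not_even_iff_odd.mpr ho), coeff_Wcomp]
    by_cases hs : 2 ∣ (d + i - k)
    · rw [if_pos (show 2 ∣ m - k by omega),
        if_pos (show 2 ∣ (d + i - k) ∧ (d + i - k) / 2 < d from ⟨hs, by omega⟩),
        (show N / 2 + 1 - d + (d + i - k) / 2 = (m - k) / 2 by omega)]
    · rw [if_neg (show ¬ 2 ∣ m - k by omega),
        if_neg (show ¬ (2 ∣ (d + i - k) ∧ (d + i - k) / 2 < d) from fun h => hs h.1)]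
end
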